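/- Let $k \ge 1$ be an integer, let $f(u) = m\lceil k u \rceil$ for $u \in [0,1]$ where $m \ge 1$ is an integer, and let $g : [0,1] \to [0, m]$ be integrable. Then $\int_0^1 \left( f(u) - \left\lfloor k \int_0^u g(y)\,dy \right\rfloor \right) du \ge k \int_0^1 (m - g(u))(1 - u)\, du$. -/

import Mathlib

open MeasureTheory Set

/-- Small-job flow-time lower bound: with `f u = m⌈k u⌉` released jobs and at most
`⌊k ∫₀ᵘ g⌋` completed jobs by time `u`,
`∫₀¹ (f(u) - ⌊k ∫₀ᵘ g⌋) du ≥ k ∫₀¹ (m - g(u))(1 - u) du`. -/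
lemma fubini_tri (g : ℝ → ℝ)
    (hg_int : MeasureTheory.IntegrableOn g (Set.Icc 0 1)) :
    ∫ u in Set.Ioc (0:ℝ) 1, (∫ y in Set.Ioc (0:ℝ) u, g y) =
      ∫ y in Set.Ioc (0:ℝ) 1, g y * (1 - y) := by
  set μ : Measure ℝ := volume.restrict (Set.Ioc (0:ℝ) 1) with hμ
  have hμ1 : μ Set.univ = 1 := by
    simp [hμ, Measure.restrict_apply, Real.volume_Ioc]
  have hfin : IsFiniteMeasure μ := ⟨by rw [hμ1]; exact ENNReal.one_lt_top⟩
  have hgμ : AEStronglyMeasurable g μ := by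
    refine hg_int.aestronglyMeasurable.mono_measure ?_
    exact Measure.restrict_mono Set.Ioc_subset_Icc_self le_rfl
  have hgint : Integrable g μ := hg_int.mono_set Set.Ioc_subset_Icc_self
  set T : Set (ℝ × ℝ) := {q : ℝ × ℝ | q.2 ≤ q.1} with hT
  have hTm : MeasurableSet T := measurableSet_le measurable_snd measurable_fst
  set H : ℝ × ℝ → ℝ := T.indicator (fun q => g q.2) with hH
  have hsnd : Integrable (fun q : ℝ × ℝ => g q.2) (μ.prod μ) := by
    rw [integrable_prod_iff' (hgμ.comp_snd (μ := μ))]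
    constructor
    · filter_upwards with y
      exact integrable_const _
    · simpa [integral_const, measureReal_def, hμ1] using hgint.norm
  have hHint : Integrable H (μ.prod μ) := hsnd.indicator hTm
  have hswap := integral_integral_swap (f := fun u y => H (u, y)) (μ := μ) (ν := μ) (by exact hHint)
  have hleft : (∫ u, ∫ y, H (u, y) ∂μ ∂μ) = ∫ u in Set.Ioc (0:ℝ) 1, (∫ y in Set.Ioc (0:ℝ) u, g y) := by
    rw [hμ]
    refine setIntegral_congr_fun measurableSet_Ioc (fun u hu => ?_)
    have : (fun y => H (u, y)) = (Set.Iic u).indicator g := by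
      funext y
      simp [hH, hT, Set.indicator_apply]
    rw [this, ← hμ, hμ, setIntegral_indicator measurableSet_Iic, Set.Ioc_inter_Iic,
      min_eq_right hu.2]
  have hright : (∫ y, ∫ u, H (u, y) ∂μ ∂μ) = ∫ y in Set.Ioc (0:ℝ) 1, g y * (1 - y) := by
    rw [hμ]
    refine setIntegral_congr_fun measurableSet_Ioc (fun y hy => ?_)
    have : (fun u => H (u, y)) = (Set.Ici y).indicator (fun _ => g y) := by
      funext u
      simp [hH, hT, Set.indicator_apply]
    rw [this, ← hμ, hμ, setIntegral_indicator measurableSet_Ici]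
    have hset : Set.Ioc (0:ℝ) 1 ∩ Set.Ici y = Set.Icc y 1 := by
      ext u
      simp only [Set.mem_inter_iff, Set.mem_Ioc, Set.mem_Ici, Set.mem_Icc]
      constructor
      · rintro ⟨⟨_, h1⟩, h2⟩; exact ⟨h2, h1⟩
      · rintro ⟨h1, h2⟩; exact ⟨⟨lt_of_lt_of_le hy.1 h1, h2⟩, h1⟩
    rw [hset]
    rw [setIntegral_const]
    rw [measureReal_def, Real.volume_Icc, ENNReal.toReal_ofReal (by linarith [hy.2])]
    simp [smul_eq_mul]; ring
  rw [← hleft, hswap, hright]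

theorem small_job_flow_lb (k m : ℕ) (hk : 1 ≤ k) (hm : 1 ≤ m) (g : ℝ → ℝ)
    (hg_int : MeasureTheory.IntegrableOn g (Set.Icc 0 1))
    (hg_bd : ∀ u ∈ Set.Icc (0 : ℝ) 1, g u ∈ Set.Icc (0 : ℝ) m) :
    (k : ℝ) * ∫ u in (0 : ℝ)..1, ((m : ℝ) - g u) * (1 - u) ≤
      ∫ u in (0 : ℝ)..1,
        ((m : ℝ) * (⌈(k : ℝ) * u⌉ : ℤ) - ((⌊(k : ℝ) * ∫ y in (0 : ℝ)..u, g y⌋ : ℤ) : ℝ)) := by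
  set F : ℝ → ℝ := fun u => ∫ y in (0:ℝ)..u, g y with hF
  have hFeq : ∀ u ∈ Set.Icc (0:ℝ) 1, F u = ∫ y in Set.Ioc (0:ℝ) u, g y := by
    intro u hu
    rw [hF]
    exact intervalIntegral.integral_of_le hu.1
  have hFc : ContinuousOn F (Set.Icc 0 1) := by
    refine (continuousOn_congr ?_).mp (intervalIntegral.continuousOn_primitive (f := g) (μ := volume) hg_int)
    intro u hu
    exact (hFeq u hu).symm
  have hFbd : ∀ u ∈ Set.Icc (0:ℝ) 1, 0 ≤ F u ∧ F u ≤ m := by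
    intro u hu
    rw [hFeq u hu]
    have hsub : Set.Ioc (0:ℝ) u ⊆ Set.Icc (0:ℝ) 1 := fun x hx =>
      ⟨le_of_lt hx.1, le_trans hx.2 hu.2⟩
    constructor
    · refine setIntegral_nonneg measurableSet_Ioc (fun x hx => (hg_bd x (hsub hx)).1)
    · calc ∫ y in Set.Ioc (0:ℝ) u, g y ≤ ∫ _ in Set.Ioc (0:ℝ) u, (m:ℝ) := by
            refine setIntegral_mono_on (hg_int.mono_set hsub) (integrableOn_const measure_Ioc_lt_top.ne)
              measurableSet_Ioc (fun x hx => (hg_bd x (hsub hx)).2)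
          _ ≤ (m:ℝ) := by
            rw [setIntegral_const, measureReal_def, Real.volume_Ioc, smul_eq_mul]
            rcases le_or_gt u 0 with h | h
            · simp only [ENNReal.ofReal_eq_zero.mpr (by linarith : u - 0 ≤ 0),
                ENNReal.toReal_zero, zero_mul]
              positivity
            · rw [ENNReal.toReal_ofReal (by linarith)]
              nlinarith [hu.2, (Nat.one_le_cast.mpr hm : (1:ℝ) ≤ m)]
  -- integrability pieces
  have hIoc : Set.Ioc (0:ℝ) 1 ⊆ Set.Icc 0 1 := Set.Ioc_subset_Icc_self
  have hgIoc : IntegrableOn g (Set.Ioc 0 1) := hg_int.mono_set hIoc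
  have hk0 : (0:ℝ) ≤ k := Nat.cast_nonneg k
  have hm0 : (0:ℝ) ≤ m := Nat.cast_nonneg m
  set A : ℝ → ℝ := fun u => (m : ℝ) * ((⌈(k : ℝ) * u⌉ : ℤ) : ℝ) - ((⌊(k : ℝ) * F u⌋ : ℤ) : ℝ)
    with hA
  have hceil_meas : Measurable (fun u : ℝ => ((⌈(k:ℝ)*u⌉ : ℤ) : ℝ)) := by
    refine Monotone.measurable (fun a b hab => ?_)
    have : ⌈(k:ℝ)*a⌉ ≤ ⌈(k:ℝ)*b⌉ := Int.ceil_mono (by nlinarith)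
    exact_mod_cast this
  have hFm : AEMeasurable F (volume.restrict (Set.Ioc (0:ℝ) 1)) :=
    (hFc.mono hIoc).aemeasurable measurableSet_Ioc
  have hcast : Measurable (fun z : ℤ => (z:ℝ)) := measurable_from_top
  have hfloor : AEMeasurable (fun u => ((⌊(k:ℝ) * F u⌋ : ℤ) : ℝ))
      (volume.restrict (Set.Ioc (0:ℝ) 1)) :=
    hcast.comp_aemeasurable (Int.measurable_floor.comp_aemeasurable (hFm.const_mul _))
  have hAint : IntegrableOn A (Set.Ioc 0 1) := by
    have hasm : AEStronglyMeasurable A (volume.restrict (Set.Ioc (0:ℝ) 1)) :=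
      ((hceil_meas.aemeasurable.const_mul _).sub hfloor).aestronglyMeasurable
    have hconst : IntegrableOn (fun _ : ℝ => (m:ℝ)*((k:ℝ)+1) + ((k:ℝ)*(m:ℝ)+1))
        (Set.Ioc 0 1) volume := integrableOn_const measure_Ioc_lt_top.ne
    refine hconst.mono' hasm ?_
    filter_upwards [ae_restrict_mem measurableSet_Ioc] with u hu
    have hu' : u ∈ Set.Icc (0:ℝ) 1 := hIoc hu
    have h1 : (k:ℝ)*u ≤ ((⌈(k:ℝ)*u⌉:ℤ):ℝ) := Int.le_ceil _
    have h2 : ((⌈(k:ℝ)*u⌉:ℤ):ℝ) < (k:ℝ)*u + 1 := Int.ceil_lt_add_one _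
    have h3 : ((⌊(k:ℝ)*F u⌋:ℤ):ℝ) ≤ (k:ℝ)*F u := Int.floor_le _
    have h4 : (k:ℝ)*F u - 1 < ((⌊(k:ℝ)*F u⌋:ℤ):ℝ) := Int.sub_one_lt_floor _
    obtain ⟨hF0, hFm'⟩ := hFbd u hu'
    have hku : (0:ℝ) ≤ (k:ℝ) * u := mul_nonneg hk0 hu.1.le
    have e1 : 0 ≤ (m:ℝ) * ((⌈(k:ℝ)*u⌉:ℤ):ℝ) := mul_nonneg hm0 (hku.trans h1)
    have e2 : (m:ℝ) * ((⌈(k:ℝ)*u⌉:ℤ):ℝ) ≤ (m:ℝ)*((k:ℝ)+1) := by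
      refine mul_le_mul_of_nonneg_left (h2.le.trans ?_) hm0
      nlinarith [hu'.2]
    have e3 : ((⌊(k:ℝ)*F u⌋:ℤ):ℝ) ≤ (k:ℝ)*(m:ℝ) :=
      h3.trans (mul_le_mul_of_nonneg_left hFm' hk0)
    have e4 : (-1:ℝ) ≤ ((⌊(k:ℝ)*F u⌋:ℤ):ℝ) := by nlinarith [mul_nonneg hk0 hF0]
    have hkm : (0:ℝ) ≤ (k:ℝ)*(m:ℝ) := mul_nonneg hk0 hm0
    rw [hA, Real.norm_eq_abs, abs_le]
    constructor <;> · simp only []; linarith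
  have hAii : IntervalIntegrable A volume 0 1 :=
    (intervalIntegrable_iff_integrableOn_Ioc_of_le zero_le_one).mpr hAint
  set φ : ℝ → ℝ := fun u => (k:ℝ)*((m:ℝ)*u) - (k:ℝ)*F u with hφ
  have hφc : ContinuousOn φ (Set.Icc 0 1) :=
    ((continuous_const.mul (continuous_const.mul continuous_id)).continuousOn).sub
      (continuousOn_const.mul hFc)
  have hφii : IntervalIntegrable φ volume 0 1 :=
    hφc.intervalIntegrable_of_Icc zero_le_one
  have hpt : ∀ u ∈ Set.Icc (0:ℝ) 1, φ u ≤ A u := by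
    intro u hu
    have h1 : (k:ℝ)*u ≤ ((⌈(k:ℝ)*u⌉:ℤ):ℝ) := Int.le_ceil _
    have h3 : ((⌊(k:ℝ)*F u⌋:ℤ):ℝ) ≤ (k:ℝ)*F u := Int.floor_le _
    rw [hA, hφ]
    simp only
    nlinarith
  have key : ∫ u in (0:ℝ)..1, φ u ≤ ∫ u in (0:ℝ)..1, A u :=
    intervalIntegral.integral_mono_on zero_le_one hφii hAii hpt
  have hFii : IntervalIntegrable F volume 0 1 :=
    hFc.intervalIntegrable_of_Icc zero_le_one
  have hφval : ∫ u in (0:ℝ)..1, φ u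
      = (k:ℝ)*(m:ℝ)*(1/2) - (k:ℝ) * ∫ u in (0:ℝ)..1, F u := by
    rw [hφ]
    rw [intervalIntegral.integral_sub
      ((by fun_prop : Continuous (fun u : ℝ => (k:ℝ)*((m:ℝ)*u))).intervalIntegrable 0 1)
      (hFii.const_mul _)]
    rw [intervalIntegral.integral_const_mul, intervalIntegral.integral_const_mul,
      intervalIntegral.integral_const_mul, integral_id]
    ring_nf
  have hFval : ∫ u in (0:ℝ)..1, F u = ∫ y in (0:ℝ)..1, g y * (1 - y) := by
    rw [intervalIntegral.integral_of_le zero_le_one,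
      intervalIntegral.integral_of_le zero_le_one, ← fubini_tri g hg_int]
    exact setIntegral_congr_fun measurableSet_Ioc (fun u hu => hFeq u (hIoc hu))
  have hgii : IntervalIntegrable (fun y => g y * (1-y)) volume 0 1 := by
    rw [intervalIntegrable_iff_integrableOn_Ioc_of_le zero_le_one]
    have hb : ∀ᵐ y ∂(volume.restrict (Set.Ioc (0:ℝ) 1)), ‖1 - y‖ ≤ 1 := by
      filter_upwards [ae_restrict_mem measurableSet_Ioc] with y hy
      rw [Real.norm_eq_abs, abs_le]
      constructor <;> linarith [hy.1, hy.2]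
    have h1 : Integrable (fun y => (1-y) * g y) (volume.restrict (Set.Ioc (0:ℝ) 1)) :=
      hgIoc.bdd_mul (c := 1) ((continuous_const.sub continuous_id).aestronglyMeasurable) hb
    exact h1.congr (ae_of_all _ (fun y => mul_comm _ _))
  have hmii : IntervalIntegrable (fun u => (m:ℝ)*(1-u)) volume 0 1 :=
    (continuous_const.mul (continuous_const.sub continuous_id')).intervalIntegrable 0 1
  have hLHS : ∫ u in (0:ℝ)..1, ((m:ℝ) - g u) * (1-u)
      = (m:ℝ)*(1/2) - ∫ y in (0:ℝ)..1, g y*(1-y) := by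
    rw [intervalIntegral.integral_congr
      (g := fun u => (m:ℝ)*(1-u) - g u*(1-u)) (fun u _ => by ring)]
    rw [intervalIntegral.integral_sub hmii hgii]
    congr 1
    rw [intervalIntegral.integral_const_mul]
    rw [intervalIntegral.integral_sub intervalIntegrable_const
      (intervalIntegral.intervalIntegrable_id)]
    rw [integral_id, intervalIntegral.integral_const]
    norm_num
  rw [hLHS]
  rw [hφval, hFval] at key
  have : (k:ℝ) * ((m:ℝ)*(1/2) - ∫ y in (0:ℝ)..1, g y*(1-y))
      = (k:ℝ)*(m:ℝ)*(1/2) - (k:ℝ) * ∫ y in (0:ℝ)..1, g y*(1-y) := by ring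
  rw [this]
  exact key
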